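/- Let A be an n×n complex Hermitian matrix which is either zero, or has at least one strictly positive eigenvalue and at least one strictly negative eigenvalue. Then there exists an n×n complex Hermitian positive definite matrix H such that trace(H·A) = 0. -/

import Mathlib

open scoped ComplexOrder
open Matrix

lemma unitary_conj_posDef {n : ℕ} {U D : Matrix (Fin n) (Fin n) ℂ}
    (hU : U ∈ Matrix.unitaryGroup (Fin n) ℂ) (hD : D.PosDef) :
    (U * D * Uᴴ).PosDef := by
  have hUU : U * Uᴴ = 1 := (Matrix.mem_unitaryGroup_iff).mp hU
  have hUU' : Uᴴ * U = 1 := (Matrix.mem_unitaryGroup_iff').mp hU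
  refine Matrix.PosDef.of_dotProduct_mulVec_pos ?_ ?_
  · unfold Matrix.IsHermitian
    simp [Matrix.conjTranspose_mul, mul_assoc, hD.1.eq]
  · intro x hx
    have hy : Uᴴ *ᵥ x ≠ 0 := by
      intro h0
      apply hx
      have := congrArg (fun v => U *ᵥ v) h0
      simpa [Matrix.mulVec_mulVec, hUU] using this
    have key : star x ⬝ᵥ ((U * D * Uᴴ) *ᵥ x)
        = star (Uᴴ *ᵥ x) ⬝ᵥ (D *ᵥ (Uᴴ *ᵥ x)) := by
      rw [← Matrix.mulVec_mulVec, ← Matrix.mulVec_mulVec, Matrix.dotProduct_mulVec (star x),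
        Matrix.star_mulVec, Matrix.conjTranspose_conjTranspose]
    rw [key]
    exact hD.dotProduct_mulVec_pos hy

theorem stmt_1 {n : ℕ} (A : Matrix (Fin n) (Fin n) ℂ) (hA : A.IsHermitian)
    (h : A = 0 ∨ ((∃ i, 0 < hA.eigenvalues i) ∧ (∃ i, hA.eigenvalues i < 0))) :
    ∃ H : Matrix (Fin n) (Fin n) ℂ, H.PosDef ∧ (H * A).trace = 0 := by
  rcases h with h0 | ⟨⟨ip, hip⟩, ⟨im, him⟩⟩
  · exact ⟨1, Matrix.PosDef.one, by simp [h0]⟩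
  · set lam := hA.eigenvalues with hlam
    set P : ℝ := ∑ i, if 0 < lam i then lam i else 0 with hPdef
    set N : ℝ := ∑ i, if 0 < lam i then 0 else lam i with hNdef
    have hP : 0 < P := by
      apply Finset.sum_pos' (fun i _ => by split <;> simp_all [le_of_lt])
      exact ⟨ip, Finset.mem_univ _, by simp [hip]⟩
    have hN : N < 0 := by
      have : 0 < -N := by
        rw [hNdef, ← Finset.sum_neg_distrib]
        apply Finset.sum_pos' (fun i _ => by split <;> [simp; · rename_i hi; linarith [not_lt.mp hi]])
        exact ⟨im, Finset.mem_univ _, by simp [not_lt.mpr him.le]; linarith⟩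
      linarith
    set c : Fin n → ℝ := fun i => if 0 < lam i then (-N) / P else 1 with hc
    have hcpos : ∀ i, 0 < c i := by
      intro i; rw [hc]; dsimp only; split
      · exact div_pos (by linarith) hP
      · norm_num
    have hsum : ∑ i, c i * lam i = 0 := by
      have : ∀ i, c i * lam i = (-N / P) * (if 0 < lam i then lam i else 0)
          + (if 0 < lam i then 0 else lam i) := by
        intro i; rw [hc]; dsimp only; split <;> ring
      rw [Finset.sum_congr rfl fun i _ => this i, Finset.sum_add_distrib, ← Finset.mul_sum,
        ← hPdef, ← hNdef]
      field_simp
      ring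
    set U := (hA.eigenvectorUnitary : Matrix (Fin n) (Fin n) ℂ) with hU
    have hUmem : U ∈ Matrix.unitaryGroup (Fin n) ℂ := hA.eigenvectorUnitary.2
    have hUU' : Uᴴ * U = 1 := (Matrix.mem_unitaryGroup_iff').mp hUmem
    refine ⟨U * Matrix.diagonal (fun i => (c i : ℂ)) * Uᴴ, unitary_conj_posDef hUmem
      (Matrix.PosDef.diagonal fun i => by exact_mod_cast hcpos i), ?_⟩
    have hspec : A = U * Matrix.diagonal (fun i => (lam i : ℂ)) * Uᴴ := by
      simpa [hU, Function.comp_def, Matrix.star_eq_conjTranspose] using hA.spectral_theorem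
    have e1 : ∀ (X Y : Matrix (Fin n) (Fin n) ℂ),
        (U * X * Uᴴ) * (U * Y * Uᴴ) = U * (X * Y) * Uᴴ := by
      intro X Y
      rw [Matrix.mul_assoc (U * X) Uᴴ (U * Y * Uᴴ), ← Matrix.mul_assoc Uᴴ (U * Y) Uᴴ,
        ← Matrix.mul_assoc Uᴴ U Y, hUU', Matrix.one_mul, ← Matrix.mul_assoc (U * X) Y Uᴴ,
        Matrix.mul_assoc U X Y]
    rw [hspec, e1, Matrix.trace_mul_cycle, ← Matrix.mul_assoc, hUU', Matrix.one_mul,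
      Matrix.diagonal_mul_diagonal, Matrix.trace_diagonal]
    exact_mod_cast hsum
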